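/- arXiv:0801.4548 — 8 statements merged into one kernel-verified Lean document; each statement's English description precedes it below -/
import Mathlib

section
/- Let 1 ≤ m < n be integers and define f_0 : ℝ^n → ℝ^n by f_0(x) := (x_1 − x_{m+1}, …, x_m − x_{m+1}, 0, …, 0). Let ε ∈ {±1}^n, let σ be a permutation of {1, …, n}, and let g·x denote the vector with (g·x)_i := ε_i x_{σ^{-1}(i)}. If x ∈ ℝ^n satisfies x_1 ≥ ⋯ ≥ x_n ≥ 0 and the vector g·x also satisfies (g·x)_1 ≥ ⋯ ≥ (g·x)_n ≥ 0, then f_0(g·x) = g·f_0(x). -/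
/-- Lemma 3.2: For `x ∈ Λ_n` and a signed permutation `g = (ε, σ)` (acting by
`(g·x)_i = ε_i x_{σ⁻¹(i)}`) with `g·x ∈ Λ_n`, we have `f₀(g·x) = g·f₀(x)`. -/
theorem f0_signed_perm_equivariant (m n : ℕ) (hm : 1 ≤ m) (hmn : m < n)
    (f0 : (Fin n → ℝ) → (Fin n → ℝ))
    (hf0 : ∀ (x : Fin n → ℝ) (i : Fin n),
      f0 x i = if (i : ℕ) < m then x i - x ⟨m, hmn⟩ else 0)
    (ε : Fin n → ℝ) (hε : ∀ i, ε i = 1 ∨ ε i = -1)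
    (σ : Equiv.Perm (Fin n)) (x : Fin n → ℝ)
    (hx1 : ∀ i j : Fin n, i ≤ j → x j ≤ x i) (hx2 : ∀ i, 0 ≤ x i)
    (hg1 : ∀ i j : Fin n, i ≤ j → ε j * x (σ.symm j) ≤ ε i * x (σ.symm i))
    (hg2 : ∀ i, 0 ≤ ε i * x (σ.symm i)) :
    f0 (fun i => ε i * x (σ.symm i)) = fun i => ε i * f0 x (σ.symm i) := by
  set M : Fin n := ⟨m, hmn⟩ with hM
  -- Step 1: ε i * x (σ.symm i) = x (σ.symm i)
  have hy : ∀ i, ε i * x (σ.symm i) = x (σ.symm i) := by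
    intro i
    rcases hε i with h | h
    · rw [h, one_mul]
    · have h2 := hg2 i
      rw [h] at h2 ⊢
      have := hx2 (σ.symm i)
      nlinarith
  -- Step 2: x ∘ σ.symm = x
  have hmono : Monotone (fun i => -x i) := by
    intro i j hij; simp only [neg_le_neg_iff]; exact hx1 i j hij
  have hmono2 : Monotone ((fun i => -x i) ∘ σ.symm) := by
    intro i j hij
    simp only [Function.comp, neg_le_neg_iff]
    have := hg1 i j hij
    rwa [hy i, hy j] at this
  have hperm : ∀ i, x (σ.symm i) = x i := by
    have h := Tuple.unique_monotone (f := fun i => -x i) (σ := σ.symm) (τ := 1)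
      hmono2 (by simpa using hmono)
    intro i
    have := congrFun h i
    simp only [Function.comp, Equiv.Perm.one_apply] at this
    linarith
  have hyx : ∀ i, ε i * x (σ.symm i) = x i := fun i => (hy i).trans (hperm i)
  funext i
  rw [hf0, hf0]
  simp only [hyx]
  by_cases hi : (i : ℕ) < m
  · by_cases hsi : ((σ.symm i : Fin n) : ℕ) < m
    · simp only [if_pos hi, if_pos hsi]
      rcases hε i with h | h
      · rw [h, one_mul, hperm i]
      · -- ε i = -1 forces x (σ.symm i) = 0, and then x M = 0 too
        have h2 := hg2 i
        rw [h] at h2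
        have hx0 : x (σ.symm i) = 0 := le_antisymm (by linarith) (hx2 _)
        have hxi : x i = 0 := by rw [← hperm i]; exact hx0
        have hxM : x M = 0 := by
          have h1 : x M ≤ x i := hx1 i M (by simp [Fin.le_def, hM]; omega)
          exact le_antisymm (by linarith) (hx2 M)
        rw [h, hperm i, hxi, hxM]; ring
    · simp only [if_pos hi, if_neg hsi, mul_zero]
      -- need x i = x M
      have h1 : x M ≤ x i := hx1 i M (by simp [Fin.le_def, hM]; omega)
      have h2 : x (σ.symm i) ≤ x M := hx1 M (σ.symm i) (by simp [Fin.le_def, hM]; omega)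
      rw [hperm i] at h2
      linarith
  · by_cases hsi : ((σ.symm i : Fin n) : ℕ) < m
    · simp only [if_neg hi, if_pos hsi]
      have h1 : x M ≤ x (σ.symm i) := hx1 (σ.symm i) M (by simp [Fin.le_def, hM]; omega)
      have h2 : x i ≤ x M := hx1 M i (by simp [Fin.le_def, hM]; omega)
      rw [← hperm i] at h2
      have : x (σ.symm i) - x M = 0 := by linarith
      rw [this, mul_zero]
    · simp [hi, hsi]
end

section
/- Let 1 ≤ m < n be integers and define f_0 : ℝ^n → ℝ^n by f_0(x) := (x_1 − x_{m+1}, …, x_m − x_{m+1}, 0, …, 0). Then: (i) for every x ∈ ℝ^n there exists a signed permutation g (i.e. g acting by (g·x)_i := ε_i x_{σ^{-1}(i)} with ε ∈ {±1}^n and σ a permutation of {1, …, n}) such that g·x satisfies (g·x)_1 ≥ ⋯ ≥ (g·x)_n ≥ 0; and (ii) if g and g' are two signed permutations with both g·x and g'·x satisfying this monotonicity condition, then g^{-1}·f_0(g·x) = g'^{-1}·f_0(g'·x). -/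
private lemma sgn_mul_abs_aux {e a : ℝ} (he : e = 1 ∨ e = -1) (h : 0 ≤ e * a) :
    e * a = |a| := by
  rcases he with h1 | h1 <;> subst h1
  · rw [one_mul] at h ⊢; exact (abs_of_nonneg h).symm
  · rw [abs_of_nonpos (by linarith)]; ring

private lemma side_eq (m n : ℕ) (hmn : m < n)
    (f0 : (Fin n → ℝ) → (Fin n → ℝ))
    (hf0 : ∀ (x : Fin n → ℝ) (i : Fin n),
      f0 x i = if (i : ℕ) < m then x i - x ⟨m, hmn⟩ else 0)
    (x ε : Fin n → ℝ) (σ : Equiv.Perm (Fin n))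
    (hε : ∀ i, ε i = 1 ∨ ε i = -1)
    (hmono : ∀ i j : Fin n, i ≤ j → ε j * x (σ.symm j) ≤ ε i * x (σ.symm i))
    (hpos : ∀ i, 0 ≤ ε i * x (σ.symm i)) (i : Fin n) :
    ε (σ i) * f0 (fun j => ε j * x (σ.symm j)) (σ i) =
      (if |x (σ.symm ⟨m, hmn⟩)| < x i then x i - |x (σ.symm ⟨m, hmn⟩)|
       else if x i < -|x (σ.symm ⟨m, hmn⟩)| then x i + |x (σ.symm ⟨m, hmn⟩)| else 0) := by
  set t := |x (σ.symm ⟨m, hmn⟩)| with ht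
  have habs : ∀ j, ε j * x (σ.symm j) = |x (σ.symm j)| :=
    fun j => sgn_mul_abs_aux (hε j) (hpos j)
  have ht0 : (0 : ℝ) ≤ t := abs_nonneg _
  have hxi : ε (σ i) * x i = |x i| := by
    have := habs (σ i); rwa [Equiv.symm_apply_apply] at this
  rw [hf0]
  simp only [Equiv.symm_apply_apply]
  rw [habs ⟨m, hmn⟩, ← ht]
  by_cases hσi : ((σ i : Fin n) : ℕ) < m
  · rw [if_pos hσi]
    have hkey : t ≤ |x i| := by
      have h1 : (σ i : Fin n) ≤ ⟨m, hmn⟩ := by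
        exact Fin.mk_le_of_le_val (le_of_lt hσi) |>.trans (le_refl _) |>.trans (le_refl _)
      have := hmono (σ i) ⟨m, hmn⟩ h1
      rw [habs ⟨m, hmn⟩, ← ht, habs (σ i), Equiv.symm_apply_apply] at this
      exact this
    rcases hε (σ i) with h1 | h1 <;> rw [h1] at hxi ⊢ <;>
      [(have hx : x i = |x i| := by linarith);
       (have hx : -x i = |x i| := by linarith)] <;>
      split_ifs <;> nlinarith [abs_nonneg (x i)]
  · rw [if_neg hσi, mul_zero]
    push_neg at hσi
    have h1 : (⟨m, hmn⟩ : Fin n) ≤ σ i := hσi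
    have hle : |x i| ≤ t := by
      have := hmono ⟨m, hmn⟩ (σ i) h1
      rw [habs ⟨m, hmn⟩, ← ht, habs (σ i), Equiv.symm_apply_apply] at this
      exact this
    have := le_abs_self (x i)
    have := neg_abs_le (x i)
    split_ifs <;> linarith

/-- (i) Every `x ∈ ℝ^n` can be brought into `Λ_n` by a signed permutation `g = (ε, σ)`
(acting by `(g·x)_i = ε_i x_{σ⁻¹(i)}`, so that `(g⁻¹·y)_i = ε_{σ(i)} y_{σ(i)}`), and
(ii) the resulting vector `g⁻¹·f₀(g·x)` does not depend on the choice of `g`. -/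
theorem f0_well_defined (m n : ℕ) (hm : 1 ≤ m) (hmn : m < n)
    (f0 : (Fin n → ℝ) → (Fin n → ℝ))
    (hf0 : ∀ (x : Fin n → ℝ) (i : Fin n),
      f0 x i = if (i : ℕ) < m then x i - x ⟨m, hmn⟩ else 0) :
    (∀ x : Fin n → ℝ, ∃ (ε : Fin n → ℝ) (σ : Equiv.Perm (Fin n)),
      (∀ i, ε i = 1 ∨ ε i = -1) ∧
      (∀ i j : Fin n, i ≤ j → ε j * x (σ.symm j) ≤ ε i * x (σ.symm i)) ∧
      (∀ i, 0 ≤ ε i * x (σ.symm i))) ∧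
    (∀ (x : Fin n → ℝ) (ε ε' : Fin n → ℝ) (σ σ' : Equiv.Perm (Fin n)),
      (∀ i, ε i = 1 ∨ ε i = -1) → (∀ i, ε' i = 1 ∨ ε' i = -1) →
      (∀ i j : Fin n, i ≤ j → ε j * x (σ.symm j) ≤ ε i * x (σ.symm i)) →
      (∀ i, 0 ≤ ε i * x (σ.symm i)) →
      (∀ i j : Fin n, i ≤ j → ε' j * x (σ'.symm j) ≤ ε' i * x (σ'.symm i)) →
      (∀ i, 0 ≤ ε' i * x (σ'.symm i)) →
      (fun i => ε (σ i) * f0 (fun j => ε j * x (σ.symm j)) (σ i)) =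
      (fun i => ε' (σ' i) * f0 (fun j => ε' j * x (σ'.symm j)) (σ' i))) := by
  constructor
  · intro x
    set g : Fin n → ℝ := fun i => -|x i| with hg
    set τ : Equiv.Perm (Fin n) := Tuple.sort g with hτ
    have hmono : Monotone (g ∘ τ) := Tuple.monotone_sort g
    refine ⟨fun j => if x (τ j) < 0 then -1 else 1, τ⁻¹, ?_, ?_, ?_⟩
    · intro i; dsimp only; split_ifs <;> simp
    all_goals
      have hsymm : (τ⁻¹ : Equiv.Perm (Fin n)).symm = τ := rfl
      have habs : ∀ j, (if x (τ j) < 0 then (-1 : ℝ) else 1) * x (τ j) = |x (τ j)| := by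
        intro j; split_ifs with h
        · rw [abs_of_neg h]; ring
        · rw [abs_of_nonneg (not_lt.1 h), one_mul]
    · intro i j hij
      simp only [hsymm, habs]
      have := hmono hij
      simp only [Function.comp, hg] at this
      linarith
    · intro i
      simp only [hsymm, habs]
      exact abs_nonneg _
  · intro x ε ε' σ σ' hε hε' hmono hpos hmono' hpos'
    have habs : ∀ j, ε j * x (σ.symm j) = |x (σ.symm j)| :=
      fun j => sgn_mul_abs_aux (hε j) (hpos j)
    have habs' : ∀ j, ε' j * x (σ'.symm j) = |x (σ'.symm j)| :=
      fun j => sgn_mul_abs_aux (hε' j) (hpos' j)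
    have hteq : |x (σ.symm ⟨m, hmn⟩)| = |x (σ'.symm ⟨m, hmn⟩)| := by
      set w : Fin n → ℝ := fun i => -|x i| with hw
      have h1 : Monotone (w ∘ σ.symm) := by
        intro a b hab
        have := hmono a b hab
        rw [habs a, habs b] at this
        simp only [Function.comp, hw]
        linarith
      have h2 : Monotone (w ∘ σ'.symm) := by
        intro a b hab
        have := hmono' a b hab
        rw [habs' a, habs' b] at this
        simp only [Function.comp, hw]
        linarith
      have := Tuple.unique_monotone (f := w) (σ := σ.symm) (τ := σ'.symm) h1 h2
      have := congrFun this ⟨m, hmn⟩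
      simp only [Function.comp, hw] at this
      linarith
    funext i
    rw [side_eq m n hmn f0 hf0 x ε σ hε hmono hpos i,
      side_eq m n hmn f0 hf0 x ε' σ' hε' hmono' hpos' i, hteq]
end

section
/- Let 1 ≤ m < n be integers and define f_0 : ℝ^n → ℝ^n by f_0(x) := (x_1 − x_{m+1}, …, x_m − x_{m+1}, 0, …, 0). Then there exists a continuous map f : ℝ^n → ℝ^n satisfying: (i) f(x) = f_0(x) for every x with x_1 ≥ ⋯ ≥ x_n ≥ 0; (ii) f(g·x) = g·f(x) for every x ∈ ℝ^n and every signed permutation g (acting by (g·x)_i := ε_i x_{σ^{-1}(i)} with ε ∈ {±1}^n and σ a permutation); and (iii) for every x ∈ ℝ^n, at most m coordinates of f(x) are nonzero. -/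
open Finset

private lemma continuous_finset_sup' {α : Type*} [TopologicalSpace α] {ι : Type*}
    {s : Finset ι} (hs : s.Nonempty) {g : ι → α → ℝ} (hg : ∀ i ∈ s, Continuous (g i)) :
    Continuous (fun x => s.sup' hs (fun i => g i x)) := by
  induction hs using Finset.Nonempty.cons_induction with
  | singleton i =>
    rw [show (fun x => ({i} : Finset ι).sup' (Finset.singleton_nonempty i) (fun j => g j x))
        = fun x => g i x from funext (fun x => Finset.sup'_singleton _)]
    exact hg i (by simp)
  | cons i s hi hs ih =>
    rw [show (fun x => (Finset.cons i s hi).sup' (Finset.cons_nonempty hi) (fun j => g j x))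
        = fun x => max (g i x) (s.sup' hs (fun j => g j x)) from
        funext (fun x => Finset.sup'_cons hs _)]
    exact (hg i (by simp)).max (ih (fun j hj => hg j (by simp [hj])))

private lemma continuous_finset_inf' {α : Type*} [TopologicalSpace α] {ι : Type*}
    {s : Finset ι} (hs : s.Nonempty) {g : ι → α → ℝ} (hg : ∀ i ∈ s, Continuous (g i)) :
    Continuous (fun x => s.inf' hs (fun i => g i x)) := by
  induction hs using Finset.Nonempty.cons_induction with
  | singleton i =>
    rw [show (fun x => ({i} : Finset ι).inf' (Finset.singleton_nonempty i) (fun j => g j x))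
        = fun x => g i x from funext (fun x => Finset.inf'_singleton _)]
    exact hg i (by simp)
  | cons i s hi hs ih =>
    rw [show (fun x => (Finset.cons i s hi).inf' (Finset.cons_nonempty hi) (fun j => g j x))
        = fun x => min (g i x) (s.inf' hs (fun j => g j x)) from
        funext (fun x => Finset.inf'_cons hs _)]
    exact (hg i (by simp)).min (ih (fun j hj => hg j (by simp [hj])))

private lemma clamp_neg {t s : ℝ} (ht : 0 ≤ t) :
    max (-t) (min (-s) t) = -max (-t) (min s t) := by
  rcases le_total s t with h1 | h1 <;> rcases le_total (-t) s with h2 | h2 <;>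
    simp [max_def, min_def] <;> split_ifs <;> linarith

/-- There exists a continuous `G`-equivariant extension `f : ℝ^n → ℝ^n` of `f₀ : Λ_n → Λ_n`,
whose image consists of vectors with at most `m` nonzero coordinates. Here a signed
permutation `g = (ε, σ)` acts by `(g·x)_i = ε_i x_{σ⁻¹(i)}`. -/
theorem exists_continuous_equivariant_extension (m n : ℕ) (hm : 1 ≤ m) (hmn : m < n)
    (f0 : (Fin n → ℝ) → (Fin n → ℝ))
    (hf0 : ∀ (x : Fin n → ℝ) (i : Fin n),
      f0 x i = if (i : ℕ) < m then x i - x ⟨m, hmn⟩ else 0) :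
    ∃ f : (Fin n → ℝ) → (Fin n → ℝ), Continuous f ∧
      (∀ x : Fin n → ℝ, (∀ i j : Fin n, i ≤ j → x j ≤ x i) → (∀ i, 0 ≤ x i) →
        f x = f0 x) ∧
      (∀ (x : Fin n → ℝ) (ε : Fin n → ℝ) (σ : Equiv.Perm (Fin n)),
        (∀ i, ε i = 1 ∨ ε i = -1) →
        f (fun i => ε i * x (σ.symm i)) = fun i => ε i * f x (σ.symm i)) ∧
      (∀ x : Fin n → ℝ, {i : Fin n | f x i ≠ 0}.ncard ≤ m) := by
  classical
  set P : Finset (Finset (Fin n)) := Finset.univ.powersetCard (m+1) with hPdef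
  have hPne : P.Nonempty := by
    rw [hPdef, Finset.powersetCard_nonempty]
    simpa using hmn
  have hSne : ∀ S ∈ P, S.Nonempty := by
    intro S hS
    rw [hPdef, Finset.mem_powersetCard_univ] at hS
    rw [← Finset.card_pos, hS]; omega
  -- infAbs
  set ia : (Fin n → ℝ) → Finset (Fin n) → ℝ :=
    fun x S => if h : S.Nonempty then S.inf' h (fun j => |x j|) else 0 with hiadef
  set t : (Fin n → ℝ) → ℝ := fun x => P.sup' hPne (ia x) with htdef
  have hia : ∀ (x : Fin n → ℝ) (S : Finset (Fin n)) (h : S.Nonempty),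
      ia x S = S.inf' h (fun j => |x j|) := by
    intro x S h; rw [hiadef]; simp [h]
  have ht0 : ∀ x, 0 ≤ t x := by
    intro x
    obtain ⟨S, hS⟩ := hPne
    refine le_trans ?_ (Finset.le_sup' (ia x) hS)
    rw [hia x S (hSne S hS)]
    exact Finset.le_inf' _ _ (fun j _ => abs_nonneg _)
  -- monotone invariance helper
  have hmono : ∀ (u v : Fin n → ℝ) (τ : Equiv.Perm (Fin n)),
      (∀ i, |v i| = |u (τ i)|) → t v ≤ t u := by
    intro u v τ hvu
    rw [htdef]
    apply Finset.sup'_le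
    intro S hS
    have hSn := hSne S hS
    have hcard : (S.image τ).card = m + 1 := by
      rw [Finset.card_image_of_injective _ τ.injective]
      rw [hPdef, Finset.mem_powersetCard_univ] at hS; exact hS
    have himg : S.image τ ∈ P := by
      rw [hPdef, Finset.mem_powersetCard_univ]; exact hcard
    refine le_trans ?_ (Finset.le_sup' (ia u) himg)
    rw [hia v S hSn, hia u _ (hSne _ himg)]
    rw [Finset.inf'_image]
    apply le_of_eq
    exact Finset.inf'_congr _ rfl (fun j _ => hvu j)
  have hinv : ∀ (x ε : Fin n → ℝ) (σ : Equiv.Perm (Fin n)), (∀ i, ε i = 1 ∨ ε i = -1) →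
      t (fun i => ε i * x (σ.symm i)) = t x := by
    intro x ε σ hε
    have habs : ∀ i, |ε i * x (σ.symm i)| = |x (σ.symm i)| := by
      intro i; rcases hε i with h | h <;> rw [h] <;> simp
    apply le_antisymm
    · exact hmono x _ σ.symm (fun i => habs i)
    · refine hmono (fun i => ε i * x (σ.symm i)) x σ (fun i => ?_)
      rw [habs (σ i)]
      simp
  -- the extension
    -- clamp of x i to [-t x, t x]
  refine ⟨fun x i => x i - max (-(t x)) (min (x i) (t x)), ?_, ?_, ?_, ?_⟩
  · -- continuity
    have htc : Continuous t := by
      rw [htdef]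
      apply continuous_finset_sup' hPne
      intro S hS
      have hSn := hSne S hS
      have : (fun x => ia x S) = fun x => S.inf' hSn (fun j => |x j|) := by
        funext x; exact hia x S hSn
      rw [this]
      exact continuous_finset_inf' hSn (fun j _ => (continuous_apply j).abs)
    apply continuous_pi
    intro i
    exact (continuous_apply i).sub ((htc.neg).max ((continuous_apply i).min htc))
  · -- agrees with f0 on the cone
    intro x hsort hpos
    have htx : t x = x ⟨m, hmn⟩ := by
      set mf : Fin n := ⟨m, hmn⟩
      apply le_antisymm
      · rw [htdef]
        apply Finset.sup'_le
        intro S hS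
        have hSn := hSne S hS
        have hcard : S.card = m + 1 := by
          rw [hPdef, Finset.mem_powersetCard_univ] at hS; exact hS
        -- S has an element j with mf ≤ j
        have hj : ∃ j ∈ S, mf ≤ j := by
          by_contra hc
          push_neg at hc
          have hsub : S ⊆ Finset.Iio mf := by
            intro j hjS; exact Finset.mem_Iio.mpr (hc j hjS)
          have := Finset.card_le_card hsub
          rw [hcard] at this
          have : m + 1 ≤ m := by simpa [mf] using this
          omega
        obtain ⟨j, hjS, hmj⟩ := hj
        rw [hia x S hSn]
        refine le_trans (Finset.inf'_le _ hjS) ?_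
        rw [abs_of_nonneg (hpos j)]
        exact hsort mf j hmj
      · set S : Finset (Fin n) := Finset.Iic mf with hSdef
        have hcard : S.card = m + 1 := by
          simp [hSdef, mf]
        have hSP : S ∈ P := by
          rw [hPdef, Finset.mem_powersetCard_univ]; exact hcard
        refine le_trans ?_ (Finset.le_sup' (ia x) hSP)
        rw [hia x S (hSne S hSP)]
        apply Finset.le_inf'
        intro j hjS
        rw [abs_of_nonneg (hpos j)]
        exact hsort j mf (Finset.mem_Iic.mp hjS)
    funext i
    show x i - max (-(t x)) (min (x i) (t x)) = f0 x i
    rw [hf0 x i, htx]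
    set mf : Fin n := ⟨m, hmn⟩
    by_cases hi : (i : ℕ) < m
    · rw [if_pos hi]
      have h1 : x mf ≤ x i := hsort i mf (by simp [mf, Fin.le_def]; omega)
      have h2 : 0 ≤ x mf := hpos mf
      have : max (-(x mf)) (min (x i) (x mf)) = x mf := by
        rw [min_eq_right h1, max_eq_right (by linarith)]
      rw [this]
    · rw [if_neg hi]
      have h1 : x i ≤ x mf := hsort mf i (by simp [mf, Fin.le_def]; omega)
      have h2 : 0 ≤ x i := hpos i
      have : max (-(x mf)) (min (x i) (x mf)) = x i := by
        rw [min_eq_left h1, max_eq_right (by linarith)]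
      rw [this]; ring
  · -- equivariance
    intro x ε σ hε
    funext i
    simp only
    rw [hinv x ε σ hε]
    rcases hε i with h | h
    · rw [h]; ring_nf
    · rw [h]
      have := clamp_neg (t := t x) (s := x (σ.symm i)) (ht0 x)
      have hx : min (-1 * x (σ.symm i)) (t x) = min (-(x (σ.symm i))) (t x) := by ring_nf
      rw [neg_one_mul, this]
      ring
  · -- at most m nonzero coords
    intro x
    have hsub : {i : Fin n | x i - max (-(t x)) (min (x i) (t x)) ≠ 0}
        = ↑(Finset.univ.filter (fun i => t x < |x i|)) := by
      ext i
      simp only [Set.mem_setOf_eq, Finset.coe_filter, Finset.mem_univ, true_and,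
        Set.mem_setOf_eq]
      constructor
      · intro h
        by_contra hc
        push_neg at hc
        rw [abs_le] at hc
        have : max (-(t x)) (min (x i) (t x)) = x i := by
          rw [min_eq_left hc.2, max_eq_right hc.1]
        exact h (by rw [this]; ring)
      · intro h
        rw [lt_abs] at h
        rcases h with h | h
        · have : max (-(t x)) (min (x i) (t x)) = t x := by
            rw [min_eq_right h.le, max_eq_right (by linarith [ht0 x])]
          rw [this]; intro hc; nlinarith
        · have : max (-(t x)) (min (x i) (t x)) = -(t x) := by
            rw [min_eq_left (by linarith [ht0 x]), max_eq_left (by linarith)]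
          rw [this]; intro hc; nlinarith
    rw [hsub, Set.ncard_coe_finset]
    by_contra hc
    push_neg at hc
    obtain ⟨S, hSsub, hScard⟩ := Finset.exists_subset_card_eq
      (s := Finset.univ.filter (fun i => t x < |x i|)) (n := m + 1) (by omega)
    have hSP : S ∈ P := by
      rw [hPdef, Finset.mem_powersetCard_univ]; exact hScard
    have hSn := hSne S hSP
    have h1 : ia x S ≤ t x := Finset.le_sup' (ia x) hSP
    rw [hia x S hSn] at h1
    have h2 : t x < S.inf' hSn (fun j => |x j|) := by
      rw [Finset.lt_inf'_iff]
      intro j hj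
      have := hSsub hj
      simp only [Finset.mem_filter] at this
      exact this.2
    linarith
end

section
/- Let 1 ≤ p ≤ q < ∞ be real numbers and 1 ≤ m < n integers. Let x ∈ ℝ^n satisfy x_1 ≥ x_2 ≥ ⋯ ≥ x_n ≥ 0 and x_1^p + ⋯ + x_n^p ≤ 1, and set t := x_{m+1}^p. Then x_{m+2}^q + x_{m+3}^q + ⋯ + x_n^q ≤ (1 − (m+1)·t) · t^{q/p − 1}. -/
open Finset in
/-- For a sorted vector in the unit `ℓ^p`-ball, with `t := x_{m+1}^p`,
the tail sum satisfies `x_{m+2}^q + ⋯ + x_n^q ≤ (1 - (m+1)t) t^{q/p - 1}`.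
(Indices are 1-based in the informal statement; here `x ⟨m, hmn⟩` is `x_{m+1}`.) -/
theorem tail_sum_rpow_le (p q : ℝ) (hp : 1 ≤ p) (hpq : p ≤ q)
    (m n : ℕ) (hm : 1 ≤ m) (hmn : m < n)
    (x : Fin n → ℝ)
    (hx1 : ∀ i j : Fin n, i ≤ j → x j ≤ x i) (hx2 : ∀ i, 0 ≤ x i)
    (hsum : ∑ i, x i ^ p ≤ 1) :
    ∑ i ∈ univ.filter (fun i : Fin n => m + 1 ≤ (i : ℕ)), x i ^ q
      ≤ (1 - ((m : ℝ) + 1) * x ⟨m, hmn⟩ ^ p) * (x ⟨m, hmn⟩ ^ p) ^ (q / p - 1) := by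
  have hp0 : (0:ℝ) < p := lt_of_lt_of_le one_pos hp
  have hq0 : (0:ℝ) < q := by linarith
  set xm := x ⟨m, hmn⟩ with hxm
  have hxm0 : 0 ≤ xm := hx2 _
  have hT : (xm ^ p) ^ (q / p - 1) = xm ^ (q - p) := by
    rw [← Real.rpow_mul hxm0]
    congr 1
    field_simp
  have hTnn : 0 ≤ xm ^ (q - p) := Real.rpow_nonneg hxm0 _
  -- step 1: pointwise bound
  have step1 : ∀ i ∈ univ.filter (fun i : Fin n => m + 1 ≤ (i : ℕ)),
      x i ^ q ≤ x i ^ p * xm ^ (q - p) := by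
    intro i hi
    simp only [mem_filter, mem_univ, true_and] at hi
    have hxi : x i ≤ xm := hx1 ⟨m, hmn⟩ i (by simp [Fin.le_def]; omega)
    have : x i ^ q = x i ^ p * x i ^ (q - p) := by
      rw [← Real.rpow_add' (hx2 i) (by simpa using hq0.ne')]
      ring_nf
    rw [this]
    exact mul_le_mul_of_nonneg_left
      (Real.rpow_le_rpow (hx2 i) hxi (by linarith)) (Real.rpow_nonneg (hx2 i) _)
  have step1' : ∑ i ∈ univ.filter (fun i : Fin n => m + 1 ≤ (i : ℕ)), x i ^ q
      ≤ (∑ i ∈ univ.filter (fun i : Fin n => m + 1 ≤ (i : ℕ)), x i ^ p) * xm ^ (q - p) := by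
    rw [Finset.sum_mul]
    exact Finset.sum_le_sum step1
  -- step 2: tail p-sum bound
  have hsplit := Finset.sum_filter_add_sum_filter_not (univ : Finset (Fin n))
    (fun i : Fin n => m + 1 ≤ (i : ℕ)) (fun i => x i ^ p)
  have hcard : (univ.filter (fun i : Fin n => ¬ m + 1 ≤ (i : ℕ))).card = m + 1 := by
    have : (univ.filter (fun i : Fin n => ¬ m + 1 ≤ (i : ℕ)))
        = Finset.Iic (⟨m, hmn⟩ : Fin n) := by
      ext i; simp [Fin.le_def]
    rw [this, Fin.card_Iic]
  have head_ge : ((m : ℝ) + 1) * xm ^ p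
      ≤ ∑ i ∈ univ.filter (fun i : Fin n => ¬ m + 1 ≤ (i : ℕ)), x i ^ p := by
    have := Finset.card_nsmul_le_sum
      (univ.filter (fun i : Fin n => ¬ m + 1 ≤ (i : ℕ))) (fun i => x i ^ p) (xm ^ p)
      (fun i hi => by
        simp only [mem_filter, mem_univ, true_and, not_le] at hi
        exact Real.rpow_le_rpow hxm0 (hx1 i ⟨m, hmn⟩ (by simp [Fin.le_def]; omega)) hp0.le)
    rw [hcard, nsmul_eq_mul] at this
    push_cast at this
    linarith
  have step2 : ∑ i ∈ univ.filter (fun i : Fin n => m + 1 ≤ (i : ℕ)), x i ^ p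
      ≤ 1 - ((m : ℝ) + 1) * xm ^ p := by
    have h1 : ∑ i ∈ univ.filter (fun i : Fin n => m + 1 ≤ (i : ℕ)), x i ^ p
        + ∑ i ∈ univ.filter (fun i : Fin n => ¬ m + 1 ≤ (i : ℕ)), x i ^ p ≤ 1 := by
      rw [hsplit]; exact hsum
    linarith
  calc ∑ i ∈ univ.filter (fun i : Fin n => m + 1 ≤ (i : ℕ)), x i ^ q
      ≤ (∑ i ∈ univ.filter (fun i : Fin n => m + 1 ≤ (i : ℕ)), x i ^ p) * xm ^ (q - p) :=
        step1'
    _ ≤ (1 - ((m : ℝ) + 1) * xm ^ p) * xm ^ (q - p) :=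
        mul_le_mul_of_nonneg_right step2 hTnn
    _ = (1 - ((m : ℝ) + 1) * xm ^ p) * (xm ^ p) ^ (q / p - 1) := by rw [hT]
end

section
/- Let 1 ≤ p < q < ∞ be real numbers and 1 ≤ m < n integers. Let x ∈ ℝ^n satisfy x_1 ≥ x_2 ≥ ⋯ ≥ x_n ≥ 0 and x_1^p + ⋯ + x_n^p ≤ 1. Then (m+1)·x_{m+1}^q + x_{m+2}^q + ⋯ + x_n^q ≤ (1/(m+1))^{q/p − 1}. Equivalently, ((m+1)·x_{m+1}^q + Σ_{k=m+2}^n x_k^q)^{1/q} ≤ (1/(m+1))^{1/p − 1/q}. -/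
open Finset in
/-- Key estimate: for a sorted vector in the unit `ℓ^p`-ball,
`(m+1) x_{m+1}^q + x_{m+2}^q + ⋯ + x_n^q ≤ (1/(m+1))^{q/p - 1}`; equivalently, its
`q`-th root is at most `(1/(m+1))^{1/p - 1/q}`.
(Indices are 1-based in the informal statement; here `x ⟨m, hmn⟩` is `x_{m+1}`.) -/
theorem key_estimate (p q : ℝ) (hp : 1 ≤ p) (hpq : p < q)
    (m n : ℕ) (hm : 1 ≤ m) (hmn : m < n)
    (x : Fin n → ℝ)
    (hx1 : ∀ i j : Fin n, i ≤ j → x j ≤ x i) (hx2 : ∀ i, 0 ≤ x i)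
    (hsum : ∑ i, x i ^ p ≤ 1) :
    ((m : ℝ) + 1) * x ⟨m, hmn⟩ ^ q
        + ∑ i ∈ univ.filter (fun i : Fin n => m + 1 ≤ (i : ℕ)), x i ^ q
      ≤ (1 / ((m : ℝ) + 1)) ^ (q / p - 1) ∧
    (((m : ℝ) + 1) * x ⟨m, hmn⟩ ^ q
        + ∑ i ∈ univ.filter (fun i : Fin n => m + 1 ≤ (i : ℕ)), x i ^ q) ^ (1 / q)
      ≤ (1 / ((m : ℝ) + 1)) ^ (1 / p - 1 / q) := by
  have hp0 : (0 : ℝ) < p := lt_of_lt_of_le one_pos hp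
  have hq0 : (0 : ℝ) < q := lt_trans hp0 hpq
  set a : ℝ := x ⟨m, hmn⟩ with ha_def
  have ha0 : 0 ≤ a := hx2 _
  have hM : (0 : ℝ) < (m : ℝ) + 1 := by positivity
  have hM1 : (0 : ℝ) ≤ 1 / ((m : ℝ) + 1) := by positivity
  -- the set of small indices
  have hset : univ.filter (fun i : Fin n => (i : ℕ) ≤ m) = Iic ⟨m, hmn⟩ := by
    ext i; simp [Fin.le_def]
  have hcard : (univ.filter (fun i : Fin n => (i : ℕ) ≤ m)).card = m + 1 := by
    rw [hset, Fin.card_Iic]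
  -- splitting the p-sum
  have hsplit : (∑ i, x i ^ p) =
      (∑ i ∈ univ.filter (fun i : Fin n => (i : ℕ) ≤ m), x i ^ p)
      + ∑ i ∈ univ.filter (fun i : Fin n => m + 1 ≤ (i : ℕ)), x i ^ p := by
    rw [← Finset.sum_filter_add_sum_filter_not univ (fun i : Fin n => (i : ℕ) ≤ m)]
    congr 1
    apply Finset.sum_congr _ (fun _ _ => rfl)
    apply Finset.filter_congr
    intro i _
    constructor <;> intro h <;> omega
  have hap_le : ∀ i ∈ univ.filter (fun i : Fin n => (i : ℕ) ≤ m), a ^ p ≤ x i ^ p := by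
    intro i hi
    simp only [mem_filter] at hi
    exact Real.rpow_le_rpow ha0 (hx1 i ⟨m, hmn⟩ hi.2) (le_of_lt hp0)
  have hbig : ((m : ℝ) + 1) * a ^ p
      + (∑ i ∈ univ.filter (fun i : Fin n => m + 1 ≤ (i : ℕ)), x i ^ p) ≤ 1 := by
    refine le_trans ?_ hsum
    rw [hsplit]
    gcongr
    calc ((m : ℝ) + 1) * a ^ p
        = (univ.filter (fun i : Fin n => (i : ℕ) ≤ m)).card * a ^ p := by
          rw [hcard]; push_cast; ring
      _ ≤ _ := by
          rw [← nsmul_eq_mul]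
          exact Finset.card_nsmul_le_sum _ _ _ hap_le
  -- a^p ≤ 1/(m+1)
  have hpsum0 : (0:ℝ) ≤ ∑ i ∈ univ.filter (fun i : Fin n => m + 1 ≤ (i : ℕ)), x i ^ p :=
    Finset.sum_nonneg fun i _ => Real.rpow_nonneg (hx2 i) p
  have hap : a ^ p ≤ 1 / ((m : ℝ) + 1) := by
    rw [le_div_iff₀ hM, mul_comm]
    linarith
  have ha_le : a ≤ (1 / ((m : ℝ) + 1)) ^ (1 / p) := by
    have := Real.rpow_le_rpow (Real.rpow_nonneg ha0 p) hap (le_of_lt (one_div_pos.mpr hp0))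
    rwa [← Real.rpow_mul ha0, mul_one_div, div_self hp0.ne', Real.rpow_one] at this
  -- bound each q-term by a^{q-p} · (p-term)
  have hqp0 : (0:ℝ) ≤ q - p := by linarith
  have hne : q - p + p ≠ 0 := by rw [sub_add_cancel]; exact hq0.ne'
  have haq : a ^ q = a ^ (q - p) * a ^ p := by
    rw [← Real.rpow_add' ha0 hne, sub_add_cancel]
  have hterm : ∀ i ∈ univ.filter (fun i : Fin n => m + 1 ≤ (i : ℕ)),
      x i ^ q ≤ a ^ (q - p) * x i ^ p := by
    intro i hi
    simp only [mem_filter] at hi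
    have hxa : x i ≤ a := by
      refine hx1 ⟨m, hmn⟩ i ?_
      simp only [Fin.le_def]
      omega
    calc x i ^ q = x i ^ (q - p) * x i ^ p := by
          rw [← Real.rpow_add' (hx2 i) hne, sub_add_cancel]
      _ ≤ a ^ (q - p) * x i ^ p := by
          have := Real.rpow_le_rpow (hx2 i) hxa hqp0
          have h2 := Real.rpow_nonneg (hx2 i) p
          nlinarith [Real.rpow_nonneg (hx2 i) (q - p)]
  have hS0 : 0 ≤ ((m : ℝ) + 1) * a ^ q
      + ∑ i ∈ univ.filter (fun i : Fin n => m + 1 ≤ (i : ℕ)), x i ^ q := by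
    apply add_nonneg
    · exact mul_nonneg (le_of_lt hM) (Real.rpow_nonneg ha0 q)
    · exact Finset.sum_nonneg fun i _ => Real.rpow_nonneg (hx2 i) q
  have hSle : ((m : ℝ) + 1) * a ^ q
      + (∑ i ∈ univ.filter (fun i : Fin n => m + 1 ≤ (i : ℕ)), x i ^ q)
      ≤ a ^ (q - p) * (((m : ℝ) + 1) * a ^ p
        + ∑ i ∈ univ.filter (fun i : Fin n => m + 1 ≤ (i : ℕ)), x i ^ p) := by
    rw [haq, mul_add]
    have h1 : ((m:ℝ)+1) * (a^(q-p) * a^p) = a^(q-p) * (((m:ℝ)+1) * a^p) := by ring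
    rw [h1]
    refine add_le_add le_rfl ?_
    rw [Finset.mul_sum]
    exact Finset.sum_le_sum hterm
  have haqp : a ^ (q - p) ≤ (1 / ((m : ℝ) + 1)) ^ (q / p - 1) := by
    have h := Real.rpow_le_rpow ha0 ha_le hqp0
    rw [← Real.rpow_mul hM1] at h
    have he : 1 / p * (q - p) = q / p - 1 := by field_simp
    rwa [he] at h
  have hmain : ((m : ℝ) + 1) * a ^ q
      + (∑ i ∈ univ.filter (fun i : Fin n => m + 1 ≤ (i : ℕ)), x i ^ q)
      ≤ (1 / ((m : ℝ) + 1)) ^ (q / p - 1) := by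
    calc _ ≤ a ^ (q - p) * (((m : ℝ) + 1) * a ^ p
        + ∑ i ∈ univ.filter (fun i : Fin n => m + 1 ≤ (i : ℕ)), x i ^ p) := hSle
      _ ≤ a ^ (q - p) * 1 := by
          exact mul_le_mul_of_nonneg_left hbig (Real.rpow_nonneg ha0 _)
      _ = a ^ (q - p) := mul_one _
      _ ≤ _ := haqp
  refine ⟨hmain, ?_⟩
  have h := Real.rpow_le_rpow hS0 hmain (le_of_lt (one_div_pos.mpr hq0))
  rw [← Real.rpow_mul hM1] at h
  have he : (q / p - 1) * (1 / q) = 1 / p - 1 / q := by field_simp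
  rwa [he] at h
end

section
/- Let 1 ≤ p < q < ∞ be real numbers and 1 ≤ m < n integers. Then there exists a continuous map f : ℝ^n → ℝ^n such that: (i) for every x ∈ ℝ^n, at most m coordinates of f(x) are nonzero; (ii) for every x ∈ ℝ^n with ‖x‖_{ℓ^p} ≤ 1, ‖x − f(x)‖_{ℓ^q} ≤ (1/(m+1))^{1/p − 1/q}; and consequently (iii) for all x, y ∈ ℝ^n with ‖x‖_{ℓ^p} ≤ 1, ‖y‖_{ℓ^p} ≤ 1 and f(x) = f(y), one has ‖x − y‖_{ℓ^q} ≤ 2·(1/(m+1))^{1/p − 1/q}. -/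
/-- clamp of `x` to `[-t,t]`. -/
noncomputable def clampR (t x : ℝ) : ℝ := max (min x t) (-t)

lemma abs_clampR (t x : ℝ) (ht : 0 ≤ t) : |clampR t x| = min |x| t := by
  unfold clampR
  rcases le_total x (-t) with h | h
  · rw [min_eq_left (h.trans (by linarith)), max_eq_right h, abs_neg, abs_of_nonneg ht,
      abs_of_nonpos (h.trans (by linarith)), min_eq_right (by linarith)]
  · rcases le_total x t with h2 | h2
    · rw [min_eq_left h2, max_eq_left h, min_eq_left (abs_le.2 ⟨h, h2⟩)]
    · rw [min_eq_right h2, max_eq_left (by linarith), abs_of_nonneg ht,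
        min_eq_right (by rw [abs_of_nonneg (ht.trans h2)]; exact h2)]

lemma sub_clampR_ne_zero (t x : ℝ) (ht : 0 ≤ t) : x - clampR t x ≠ 0 ↔ t < |x| := by
  unfold clampR
  rcases le_total x (-t) with h | h
  · rw [max_eq_right (min_le_of_left_le h), abs_of_nonpos (h.trans (by linarith))]
    constructor
    · intro _; rcases lt_or_eq_of_le h with h' | h'
      · linarith
      · exact absurd (by rw [h']; ring) ‹x - -t ≠ 0›
    · intro h'; intro hc; linarith [sub_eq_zero.1 hc]
  · rcases le_total x t with h2 | h2
    · rw [min_eq_left h2, max_eq_left h]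
      simp only [sub_self, ne_eq, not_true_eq_false, false_iff, not_lt]
      exact abs_le.2 ⟨h, h2⟩
    · rw [min_eq_right h2, max_eq_left (by linarith), abs_of_nonneg (ht.trans h2)]
      constructor
      · intro hne; rcases lt_or_eq_of_le h2 with h' | h'
        · exact h'
        · exact absurd (by rw [← h']; ring) hne
      · intro h'; intro hc; linarith [sub_eq_zero.1 hc]

section Thresh

variable (m n : ℕ)

lemma lqThresh_nonempty (h : m < n) : ((Finset.univ.powersetCard (n - m) :
    Finset (Finset (Fin n)))).Nonempty := by
  obtain ⟨S, hS, hcard⟩ := Finset.exists_subset_card_eq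
    (show n - m ≤ (Finset.univ : Finset (Fin n)).card by
      rw [Finset.card_univ, Fintype.card_fin]; omega)
  exact ⟨S, Finset.mem_powersetCard.2 ⟨hS, hcard⟩⟩

lemma lqThresh_mem_nonempty (h : m < n) {S : Finset (Fin n)}
    (hS : S ∈ (Finset.univ.powersetCard (n - m) : Finset (Finset (Fin n)))) :
    S.Nonempty :=
  Finset.card_pos.mp (by rw [(Finset.mem_powersetCard.1 hS).2]; omega)

/-- the `(m+1)`-th largest of `|x i|`, as min over `(n-m)`-subsets of the max. -/
noncomputable def lqThresh (h : m < n) (x : Fin n → ℝ) : ℝ :=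
  (Finset.univ.powersetCard (n - m) : Finset (Finset (Fin n))).attach.inf'
    (Finset.attach_nonempty_iff.2 (lqThresh_nonempty m n h))
    fun S => S.1.sup' (lqThresh_mem_nonempty m n h S.2) fun i => |x i|

lemma lqThresh_le (h : m < n) (x : Fin n → ℝ) {S : Finset (Fin n)} (hS : S.card = n - m)
    (hne : S.Nonempty) : lqThresh m n h x ≤ S.sup' hne fun i => |x i| :=
  Finset.inf'_le _ (Finset.mem_attach _ ⟨S, Finset.mem_powersetCard.2 ⟨S.subset_univ, hS⟩⟩)

lemma lqThresh_exists_min (h : m < n) (x : Fin n → ℝ) :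
    ∃ S : Finset (Fin n), S.card = n - m ∧ ∀ i ∈ S, |x i| ≤ lqThresh m n h x := by
  obtain ⟨S, hS, heq⟩ := Finset.exists_mem_eq_inf'
    (Finset.attach_nonempty_iff.2 (lqThresh_nonempty m n h))
    (fun S : {S // S ∈ (Finset.univ.powersetCard (n - m) :
      Finset (Finset (Fin n)))} => S.1.sup' (lqThresh_mem_nonempty m n h S.2) fun i => |x i|)
  refine ⟨S.1, (Finset.mem_powersetCard.1 S.2).2, fun i hi => ?_⟩
  unfold lqThresh
  rw [heq]
  exact (Finset.le_sup'_iff _).2 ⟨i, hi, le_refl _⟩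

lemma lqThresh_nonneg (h : m < n) (x : Fin n → ℝ) : 0 ≤ lqThresh m n h x := by
  apply Finset.le_inf'
  intro S _
  obtain ⟨i, hi⟩ := lqThresh_mem_nonempty m n h S.2
  exact (Finset.le_sup'_iff _).2 ⟨i, hi, abs_nonneg _⟩

lemma lqThresh_continuous (h : m < n) : Continuous (lqThresh m n h) := by
  unfold lqThresh
  apply Continuous.finset_inf'_apply
  intro S _
  apply Continuous.finset_sup'_apply
  intro i _
  exact (continuous_apply i).abs

lemma lqThresh_card_lt (h : m < n) (x : Fin n → ℝ) :
    (Finset.univ.filter fun i => lqThresh m n h x < |x i|).card ≤ m := by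
  obtain ⟨S, hScard, hS⟩ := lqThresh_exists_min m n h x
  have hsub : (Finset.univ.filter fun i => lqThresh m n h x < |x i|) ⊆ Sᶜ := by
    intro i hi
    rw [Finset.mem_filter] at hi
    rw [Finset.mem_compl]
    intro hiS
    exact absurd (hS i hiS) (not_le.2 hi.2)
  have := Finset.card_le_card hsub
  rw [Finset.card_compl, hScard] at this
  simp only [Fintype.card_fin] at this
  omega

lemma lqThresh_card_ge (h : m < n) (x : Fin n → ℝ) :
    m + 1 ≤ (Finset.univ.filter fun i => lqThresh m n h x ≤ |x i|).card := by
  have hkey : (Finset.univ.filter fun i => |x i| < lqThresh m n h x).card ≤ n - m - 1 := by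
    by_contra hc
    push_neg at hc
    obtain ⟨S, hSsub, hScard⟩ := Finset.exists_subset_card_eq
      (show n - m ≤ (Finset.univ.filter fun i => |x i| < lqThresh m n h x).card by omega)
    have hne : S.Nonempty := Finset.card_pos.mp (by omega)
    have h1 := lqThresh_le m n h x hScard hne
    have h2 : S.sup' hne (fun i => |x i|) < lqThresh m n h x := by
      rw [Finset.sup'_lt_iff]
      intro i hi
      exact (Finset.mem_filter.1 (hSsub hi)).2
    exact absurd h1 (not_le.2 h2)
  have hsplit := Finset.card_filter_add_card_filter_not
    (s := (Finset.univ : Finset (Fin n))) (p := fun i => |x i| < lqThresh m n h x)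
  simp only [not_lt, Finset.card_univ, Fintype.card_fin] at hsplit
  have : (Finset.univ.filter fun i => lqThresh m n h x ≤ |x i|).card
      = (Finset.univ.filter fun i => ¬ (|x i| < lqThresh m n h x)).card := by
    congr 1; ext i; simp [not_lt]
  omega

end Thresh

/-- Main construction: there is a continuous map `f : ℝ^n → ℝ^n` whose image lies in the
union of the `m`-dimensional coordinate subspaces and which moves each point of the unit
`ℓ^p`-ball by at most `(1/(m+1))^{1/p - 1/q}` in the `ℓ^q`-distance; consequently it is a
`2(1/(m+1))^{1/p - 1/q}`-embedding of the ball with respect to the `ℓ^q`-distance. -/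
theorem exists_eps_embedding_lq (p q : ℝ) (hp : 1 ≤ p) (hpq : p < q)
    (m n : ℕ) (hm : 1 ≤ m) (hmn : m < n) :
    ∃ f : (Fin n → ℝ) → (Fin n → ℝ), Continuous f ∧
      (∀ x : Fin n → ℝ, {i : Fin n | f x i ≠ 0}.ncard ≤ m) ∧
      (∀ x : Fin n → ℝ, (∑ i, |x i| ^ p) ^ (1 / p) ≤ 1 →
        (∑ i, |x i - f x i| ^ q) ^ (1 / q) ≤ (1 / ((m : ℝ) + 1)) ^ (1 / p - 1 / q)) ∧
      (∀ x y : Fin n → ℝ, (∑ i, |x i| ^ p) ^ (1 / p) ≤ 1 →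
        (∑ i, |y i| ^ p) ^ (1 / p) ≤ 1 → f x = f y →
        (∑ i, |x i - y i| ^ q) ^ (1 / q) ≤ 2 * (1 / ((m : ℝ) + 1)) ^ (1 / p - 1 / q)) := by
  have hp0 : 0 < p := lt_of_lt_of_le zero_lt_one hp
  have hq0 : 0 < q := hp0.trans hpq
  have hq1 : 1 ≤ q := hp.trans hpq.le
  set T : (Fin n → ℝ) → ℝ := lqThresh m n hmn with hT
  have key : ∀ x : Fin n → ℝ, (∑ i, |x i| ^ p) ^ (1 / p) ≤ 1 →
      (∑ i, |x i - (x i - clampR (T x) (x i))| ^ q) ^ (1 / q)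
        ≤ (1 / ((m : ℝ) + 1)) ^ (1 / p - 1 / q) := by
    intro x hx
    have ht0 := lqThresh_nonneg m n hmn x
    set t := T x with htdef
    have hs0 : (0:ℝ) ≤ ∑ i, |x i| ^ p :=
      Finset.sum_nonneg fun i _ => Real.rpow_nonneg (abs_nonneg _) _
    have hsum : ∑ i, |x i| ^ p ≤ 1 := by
      have := Real.rpow_le_rpow (Real.rpow_nonneg hs0 _) hx hp0.le
      rwa [one_div, Real.rpow_inv_rpow hs0 hp0.ne', Real.one_rpow] at this
    have htp : ((m:ℝ) + 1) * t ^ p ≤ 1 := by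
      have hcard := lqThresh_card_ge m n hmn x
      set B := (Finset.univ.filter fun i => t ≤ |x i|) with hB
      have h1 : ((m:ℝ) + 1) * t ^ p ≤ (B.card : ℝ) * t ^ p := by
        apply mul_le_mul_of_nonneg_right _ (Real.rpow_nonneg ht0 _)
        exact_mod_cast hcard
      have h2 : (B.card : ℝ) * t ^ p = ∑ _i ∈ B, t ^ p := by
        rw [Finset.sum_const, nsmul_eq_mul]
      have h3 : ∑ _i ∈ B, t ^ p ≤ ∑ i ∈ B, |x i| ^ p :=
        Finset.sum_le_sum fun i hi =>
          Real.rpow_le_rpow ht0 (Finset.mem_filter.1 hi).2 hp0.le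
      have h4 : ∑ i ∈ B, |x i| ^ p ≤ ∑ i, |x i| ^ p :=
        Finset.sum_le_sum_of_subset_of_nonneg (Finset.filter_subset _ _)
          fun i _ _ => Real.rpow_nonneg (abs_nonneg _) _
      linarith
    have hmpos : (0:ℝ) < (m:ℝ) + 1 := by positivity
    have htple : t ^ p ≤ 1 / ((m:ℝ) + 1) := by
      rw [le_div_iff₀ hmpos]; linarith [htp]
    have htle : t ≤ (1 / ((m:ℝ) + 1)) ^ (1 / p) := by
      have h1 : (t ^ p) ^ (1/p) ≤ (1 / ((m:ℝ) + 1)) ^ (1/p) :=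
        Real.rpow_le_rpow (Real.rpow_nonneg ht0 _) htple (by positivity)
      have h2 : (t ^ p) ^ (1/p) = t := by
        rw [one_div, Real.rpow_rpow_inv ht0 hp0.ne']
      linarith
    have habs : ∀ i, |x i - (x i - clampR t (x i))| = min |x i| t := by
      intro i
      rw [show x i - (x i - clampR t (x i)) = clampR t (x i) by ring]
      exact abs_clampR t (x i) ht0
    have hterm : ∀ i : Fin n, |x i - (x i - clampR t (x i))| ^ q
        ≤ min |x i| t ^ p * t ^ (q - p) := by
      intro i
      rw [habs i]
      have hg0 : 0 ≤ min |x i| t := le_min (abs_nonneg _) ht0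
      have : min |x i| t ^ q = min |x i| t ^ p * min |x i| t ^ (q - p) := by
        rw [← Real.rpow_add' hg0 (by ring_nf; positivity)]
        ring_nf
      rw [this]
      exact mul_le_mul_of_nonneg_left
        (Real.rpow_le_rpow hg0 (min_le_right _ _) (by linarith))
        (Real.rpow_nonneg hg0 _)
    have hsum2 : ∑ i, |x i - (x i - clampR t (x i))| ^ q ≤ t ^ (q - p) := by
      calc ∑ i, |x i - (x i - clampR t (x i))| ^ q
          ≤ ∑ i, min |x i| t ^ p * t ^ (q - p) := Finset.sum_le_sum fun i _ => hterm i
        _ = (∑ i, min |x i| t ^ p) * t ^ (q - p) := by rw [Finset.sum_mul]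
        _ ≤ 1 * t ^ (q - p) := by
            apply mul_le_mul_of_nonneg_right _ (Real.rpow_nonneg ht0 _)
            refine le_trans (Finset.sum_le_sum fun i _ => ?_) hsum
            exact Real.rpow_le_rpow (le_min (abs_nonneg _) ht0) (min_le_left _ _) hp0.le
        _ = t ^ (q - p) := one_mul _
    calc (∑ i, |x i - (x i - clampR t (x i))| ^ q) ^ (1/q)
        ≤ (t ^ (q - p)) ^ (1/q) := by
          apply Real.rpow_le_rpow _ hsum2 (by positivity)
          exact Finset.sum_nonneg fun i _ => Real.rpow_nonneg (abs_nonneg _) _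
      _ = t ^ ((q - p) * (1/q)) := by rw [← Real.rpow_mul ht0]
      _ ≤ ((1 / ((m:ℝ) + 1)) ^ (1/p)) ^ ((q - p) * (1/q)) := by
          apply Real.rpow_le_rpow ht0 htle
          have : 0 ≤ q - p := by linarith
          positivity
      _ = (1 / ((m:ℝ) + 1)) ^ (1 / p - 1 / q) := by
          rw [← Real.rpow_mul (by positivity)]
          congr 1
          field_simp
  refine ⟨fun x i => x i - clampR (T x) (x i), ?_, ?_, ?_, ?_⟩
  · -- continuity
    apply continuous_pi
    intro i
    apply (continuous_apply i).sub
    exact (((continuous_apply i).min (lqThresh_continuous m n hmn)).max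
      (lqThresh_continuous m n hmn).neg)
  · -- support bound
    intro x
    have ht0 := lqThresh_nonneg m n hmn x
    have hset : {i : Fin n | x i - clampR (T x) (x i) ≠ 0}
        = ((Finset.univ.filter fun i => T x < |x i|) : Finset (Fin n)) := by
      ext i
      simp only [Set.mem_setOf_eq, Finset.coe_filter, Finset.mem_univ, true_and,
        Set.mem_setOf_eq]
      exact sub_clampR_ne_zero (T x) (x i) ht0
    rw [hset, Set.ncard_coe_finset]
    exact lqThresh_card_lt m n hmn x
  · -- distance bound
    exact key
  · -- consequence
    intro x y hx hy hfxy
    have hx' := key x hx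
    have hy' := key y hy
    set a : Fin n → ℝ := fun i => x i - (x i - clampR (T x) (x i)) with ha
    set b : Fin n → ℝ := fun i => (y i - clampR (T y) (y i)) - y i with hb
    have hsum_eq : ∑ i, |x i - y i| ^ q = ∑ i, |a i + b i| ^ q := by
      refine Finset.sum_congr rfl fun i _ => ?_
      have hfi := congrFun hfxy i
      simp only at hfi
      have : x i - y i = a i + b i := by rw [ha, hb]; simp only; linarith
      rw [this]
    have hmink := Real.Lp_add_le Finset.univ a b hq1
    have hbq : (∑ i, |b i| ^ q) ^ (1/q) = (∑ i, |y i - (y i - clampR (T y) (y i))| ^ q) ^ (1/q) := by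
      congr 1
      refine Finset.sum_congr rfl fun i _ => ?_
      rw [hb]
      simp only
      rw [abs_sub_comm]
    rw [hsum_eq]
    have h2 : (∑ i, |a i| ^ q) ^ (1/q) ≤ (1 / ((m:ℝ) + 1)) ^ (1 / p - 1 / q) := hx'
    have h3 : (∑ i, |b i| ^ q) ^ (1/q) ≤ (1 / ((m:ℝ) + 1)) ^ (1 / p - 1 / q) := by
      rw [hbq]; exact hy'
    linarith
end

section
/- Let 1 ≤ p < ∞ be a real number and 1 ≤ m < n integers. Then there exists a continuous map f : ℝ^n → ℝ^n such that: (i) for every x ∈ ℝ^n, at most m coordinates of f(x) are nonzero; (ii) for every x ∈ ℝ^n with ‖x‖_{ℓ^p} ≤ 1, max_{1≤i≤n} |x_i − f(x)_i| ≤ (1/(m+1))^{1/p}; and consequently (iii) for all x, y ∈ ℝ^n with ‖x‖_{ℓ^p} ≤ 1, ‖y‖_{ℓ^p} ≤ 1 and f(x) = f(y), one has max_{1≤i≤n} |x_i − y_i| ≤ 2·(1/(m+1))^{1/p}. -/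
/-- counting lemma: if `∑ |v i|^p ≤ 1` and `τ^p = 1/(m+1)`, then fewer than `m+1`
coordinates exceed `τ`. -/
lemma count_big_coords {n m : ℕ} (p τ : ℝ) (hτ0 : 0 ≤ τ) (hp : 0 < p)
    (hτ : τ ^ p = 1 / ((m : ℝ) + 1)) (v : Fin n → ℝ) (hv : ∑ i, |v i| ^ p ≤ 1) :
    {i : Fin n | τ < |v i|}.ncard ≤ m := by
  classical
  have hm1 : (0:ℝ) < (m : ℝ) + 1 := by positivity
  have hτp : (0:ℝ) < τ ^ p := by rw [hτ]; positivity
  set F : Finset (Fin n) := Finset.univ.filter (fun i => τ < |v i|) with hF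
  have hset : {i : Fin n | τ < |v i|} = ↑F := by
    ext i; simp [hF]
  rw [hset, Set.ncard_coe_finset]
  by_contra hc
  push_neg at hc
  have hcard : m + 1 ≤ F.card := hc
  have hne : F.Nonempty := Finset.card_pos.mp (by omega)
  have hlt : ∀ i ∈ F, τ ^ p < |v i| ^ p := by
    intro i hi
    have : τ < |v i| := by simpa [hF] using hi
    exact Real.rpow_lt_rpow hτ0 this hp
  have h1 : (F.card : ℝ) * τ ^ p < ∑ i ∈ F, |v i| ^ p := by
    have hs : ∑ _i ∈ F, τ ^ p < ∑ i ∈ F, |v i| ^ p :=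
      Finset.sum_lt_sum_of_nonempty hne hlt
    simpa [Finset.sum_const, nsmul_eq_mul] using hs
  have h2 : ∑ i ∈ F, |v i| ^ p ≤ ∑ i, |v i| ^ p := by
    apply Finset.sum_le_sum_of_subset_of_nonneg (Finset.subset_univ F)
    intro i _ _
    positivity
  have h3 : (1:ℝ) ≤ (F.card : ℝ) * τ ^ p := by
    have hge : ((m:ℝ) + 1) ≤ (F.card : ℝ) := by exact_mod_cast hcard
    calc (1:ℝ) = ((m:ℝ)+1) * τ ^ p := by rw [hτ]; field_simp
      _ ≤ (F.card : ℝ) * τ ^ p := by nlinarith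
  linarith

/-- The `q = ∞` case: there is a continuous map `f : ℝ^n → ℝ^n` whose image lies in the
union of the `m`-dimensional coordinate subspaces and which moves each point of the unit
`ℓ^p`-ball by at most `(1/(m+1))^{1/p}` in the `ℓ^∞`-distance; consequently it is a
`2(1/(m+1))^{1/p}`-embedding of the ball with respect to the `ℓ^∞`-distance. -/
theorem exists_eps_embedding_linfty (p : ℝ) (hp : 1 ≤ p)
    (m n : ℕ) (hm : 1 ≤ m) (hmn : m < n) :
    ∃ f : (Fin n → ℝ) → (Fin n → ℝ), Continuous f ∧
      (∀ x : Fin n → ℝ, {i : Fin n | f x i ≠ 0}.ncard ≤ m) ∧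
      (∀ x : Fin n → ℝ, (∑ i, |x i| ^ p) ^ (1 / p) ≤ 1 →
        ∀ i : Fin n, |x i - f x i| ≤ (1 / ((m : ℝ) + 1)) ^ (1 / p)) ∧
      (∀ x y : Fin n → ℝ, (∑ i, |x i| ^ p) ^ (1 / p) ≤ 1 →
        (∑ i, |y i| ^ p) ^ (1 / p) ≤ 1 → f x = f y →
        ∀ i : Fin n, |x i - y i| ≤ 2 * (1 / ((m : ℝ) + 1)) ^ (1 / p)) := by
  classical
  have hp0 : (0:ℝ) < p := lt_of_lt_of_le one_pos hp
  have hpne : p ≠ 0 := ne_of_gt hp0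
  set τ : ℝ := (1 / ((m : ℝ) + 1)) ^ (1 / p) with hτdef
  have hm1 : (0:ℝ) < (m : ℝ) + 1 := by positivity
  have hτ0 : 0 < τ := Real.rpow_pos_of_pos (by positivity) _
  have hτp : τ ^ p = 1 / ((m : ℝ) + 1) := by
    rw [hτdef, ← Real.rpow_mul (by positivity), one_div_mul_cancel hpne, Real.rpow_one]
  -- the ℓ^p "norm-ish" function
  set N : (Fin n → ℝ) → ℝ := fun x => max 1 ((∑ i, |x i| ^ p) ^ (1 / p)) with hN
  have hN1 : ∀ x, 1 ≤ N x := fun x => le_max_left _ _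
  have hNpos : ∀ x, 0 < N x := fun x => lt_of_lt_of_le one_pos (hN1 x)
  have hNcont : Continuous N := by
    apply continuous_const.max
    apply Continuous.rpow_const
    · apply continuous_finset_sum
      intro i _
      exact ((continuous_apply i).abs).rpow_const (fun x => Or.inr (le_of_lt hp0))
    · intro x; right; positivity
  -- retraction to the ball
  set g : (Fin n → ℝ) → (Fin n → ℝ) := fun x i => x i / N x with hg
  -- soft thresholding
  set st : ℝ → ℝ := fun t => t - max (-τ) (min τ t) with hst
  have hstcont : Continuous st := by
    apply continuous_id.sub
    exact continuous_const.max (continuous_const.min continuous_id)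
  set f : (Fin n → ℝ) → (Fin n → ℝ) := fun x i => st (g x i) with hf
  have hgsum : ∀ x, ∑ i, |g x i| ^ p ≤ 1 := by
    intro x
    have hA : (0:ℝ) ≤ ∑ i, |x i| ^ p := by positivity
    have h1 : (∑ i, |x i| ^ p) ^ (1/p) ≤ N x := le_max_right _ _
    have h2 : ∑ i, |x i| ^ p ≤ (N x) ^ p := by
      have := Real.rpow_le_rpow (Real.rpow_nonneg hA _) h1 (le_of_lt hp0)
      rwa [← Real.rpow_mul hA, one_div_mul_cancel hpne, Real.rpow_one] at this
    have : ∑ i, |g x i| ^ p = (∑ i, |x i| ^ p) / (N x) ^ p := by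
      rw [Finset.sum_div]
      congr 1; ext i
      rw [hg]
      rw [abs_div, abs_of_pos (hNpos x), Real.div_rpow (abs_nonneg _) (le_of_lt (hNpos x))]
    rw [this, div_le_one (Real.rpow_pos_of_pos (hNpos x) p)]
    exact h2
  -- on the ball, g = id
  have hgball : ∀ x : Fin n → ℝ, (∑ i, |x i| ^ p) ^ (1 / p) ≤ 1 → g x = x := by
    intro x hx
    have : N x = 1 := max_eq_left hx
    funext i
    rw [hg]; simp [this]
  -- st moves by at most τ
  have hstmove : ∀ t : ℝ, |t - st t| ≤ τ := by
    intro t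
    rw [hst]
    simp only [sub_sub_cancel]
    rw [abs_le]
    constructor
    · exact le_max_left _ _
    · exact max_le (le_of_lt (neg_lt_self hτ0)) (min_le_left _ _)
  -- st t ≠ 0 implies τ < |t|
  have hstne : ∀ t : ℝ, st t ≠ 0 → τ < |t| := by
    intro t ht
    by_contra hcon
    push_neg at hcon
    apply ht
    rw [hst]
    have h1 : -τ ≤ t := neg_le_of_abs_le hcon
    have h2 : t ≤ τ := le_of_abs_le hcon
    simp [min_eq_right h2, max_eq_right h1]
  refine ⟨f, ?_, ?_, ?_, ?_⟩
  · rw [hf]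
    apply continuous_pi
    intro i
    apply hstcont.comp
    exact (continuous_apply i).div hNcont (fun x => ne_of_gt (hNpos x))
  · intro x
    have hsub : {i : Fin n | f x i ≠ 0} ⊆ {i : Fin n | τ < |g x i|} := by
      intro i hi
      exact hstne _ hi
    calc {i : Fin n | f x i ≠ 0}.ncard ≤ {i : Fin n | τ < |g x i|}.ncard :=
          Set.ncard_le_ncard hsub (Set.toFinite _)
      _ ≤ m := count_big_coords p τ (le_of_lt hτ0) hp0 hτp (g x) (hgsum x)
  · intro x hx i
    have hfx : f x i = st (x i) := by
      show st (g x i) = st (x i); rw [hgball x hx]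
    rw [hfx]
    exact hstmove (x i)
  · intro x y hx hy hfxy i
    have h1 : |x i - f x i| ≤ τ := by
      have hfx : f x i = st (x i) := by
        show st (g x i) = st (x i); rw [hgball x hx]
      rw [hfx]; exact hstmove (x i)
    have h2 : |y i - f y i| ≤ τ := by
      have hfy : f y i = st (y i) := by
        show st (g y i) = st (y i); rw [hgball y hy]
      rw [hfy]; exact hstmove (y i)
    have : x i - y i = (x i - f x i) - (y i - f y i) := by
      rw [hfxy]; ring
    calc |x i - y i| ≤ |x i - f x i| + |y i - f y i| := by
          rw [this]; exact abs_sub _ _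
      _ ≤ 2 * τ := by linarith
end

section
/- Let Γ be a countable group and 1 ≤ p < ∞ a real number. Let w : Γ → ℝ be a summable function with w(γ) > 0 for all γ ∈ Γ and Σ_{γ∈Γ} w(γ) ≤ 1. Let X := {x ∈ ℝ^Γ : Σ_{γ∈Γ} |x_γ|^p ≤ 1}, equipped with the topology induced from the product topology on ℝ^Γ, and define d(x, y) := Σ_{γ∈Γ} w(γ)·|x_γ − y_γ| for x, y ∈ X. Γ acts on X on the right by (x·δ)_γ := x_{δγ}. Then for every ε > 0 and every finite subset Ω ⊆ Γ, there exist a finite subset Ω' ⊆ Γ and a continuous map F : X → ℝ^{Ω'} such that: (i) for every x ∈ X, at most ⌈(4/ε)^p⌉ − 1 coordinates of F(x) are nonzero; and (ii) for all x, y ∈ X with F(x) = F(y) and every δ ∈ Ω, d(x·δ, y·δ) ≤ ε. -/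
/-- Soft-threshold function. -/
noncomputable def softTh (c t : ℝ) : ℝ := max (t - c) 0 + min (t + c) 0

lemma softTh_continuous (c : ℝ) : Continuous (softTh c) := by
  unfold softTh
  exact ((continuous_id.sub continuous_const).max continuous_const).add
    ((continuous_id.add continuous_const).min continuous_const)

lemma softTh_dist {c : ℝ} (hc : 0 < c) (t : ℝ) : |softTh c t - t| ≤ c := by
  unfold softTh
  rcases le_total c t with h | h
  · rw [max_eq_left (by linarith), min_eq_right (by linarith), abs_le]
    constructor <;> linarith
  rcases le_total t (-c) with h' | h'
  · rw [max_eq_right (by linarith), min_eq_left (by linarith), abs_le]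
    constructor <;> linarith
  · rw [max_eq_right (by linarith), min_eq_right (by linarith), abs_le]
    constructor <;> linarith

lemma softTh_ne_zero {c t : ℝ} (hc : 0 < c) (h : softTh c t ≠ 0) : c < |t| := by
  by_contra h'
  push_neg at h'
  rw [abs_le] at h'
  apply h
  unfold softTh
  rw [max_eq_right (by linarith), min_eq_right (by linarith)]
  ring

lemma softTh_eq {c : ℝ} (hc : 0 < c) {a b : ℝ} (h : softTh c a = softTh c b) :
    |a - b| ≤ 2 * c := by
  have : a - b = (a - softTh c a) + (softTh c b - b) := by rw [h]; ring
  rw [this]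
  calc |(a - softTh c a) + (softTh c b - b)|
      ≤ |a - softTh c a| + |softTh c b - b| := abs_add_le _ _
    _ ≤ c + c := by
        have h1 := softTh_dist hc a
        have h2 := softTh_dist hc b
        rw [abs_sub_comm] at h1
        linarith
    _ = 2 * c := by ring

/-- Corollary 1.5: for the unit ball `X = B(ℓ^p(Γ))` (with the product topology) of a
countable group `Γ`, with compatible distance `d(x,y) = ∑_γ w(γ)|x_γ - y_γ|` and the right
`Γ`-action `(x·δ)_γ = x_{δγ}`, for every `ε > 0` and finite `Ω ⊆ Γ` there is an
`ε`-embedding `F` of `(X, d_Ω)` into a space of vectors with at most `⌈(4/ε)^p⌉ - 1`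
nonzero coordinates. -/
theorem widim_ball_lp_group_bounded (Γ : Type*) [Group Γ] [Countable Γ]
    (p : ℝ) (hp : 1 ≤ p)
    (w : Γ → ℝ) (hw_pos : ∀ γ, 0 < w γ) (hw_summable : Summable w)
    (hw_sum : ∑' γ, w γ ≤ 1)
    (ε : ℝ) (hε : 0 < ε) (Ω : Finset Γ) :
    ∃ (Ω' : Finset Γ)
      (F : {x : Γ → ℝ // ∑' γ, ENNReal.ofReal (|x γ| ^ p) ≤ 1} → (Ω' → ℝ)),
      Continuous F ∧
      (∀ x, ({i : Ω' | F x i ≠ 0}.ncard : ℤ) ≤ ⌈(4 / ε) ^ p⌉ - 1) ∧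
      (∀ x y, F x = F y → ∀ δ ∈ Ω,
        ∑' γ, w γ * |x.1 (δ * γ) - y.1 (δ * γ)| ≤ ε) := by
  classical
  have hp0 : 0 < p := lt_of_lt_of_le one_pos hp
  set c : ℝ := ε / 4 with hc_def
  have hc : 0 < c := by positivity
  -- pointwise bound on members of X
  have hx_le_one : ∀ (x : {x : Γ → ℝ // ∑' γ, ENNReal.ofReal (|x γ| ^ p) ≤ 1}) (γ : Γ),
      |x.1 γ| ≤ 1 := by
    intro x γ
    have h1 : ENNReal.ofReal (|x.1 γ| ^ p) ≤ 1 := (ENNReal.le_tsum γ).trans x.2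
    have h2 : |x.1 γ| ^ p ≤ 1 := ENNReal.ofReal_le_one.mp h1
    by_contra h
    push_neg at h
    have := Real.rpow_lt_rpow (by norm_num : (0:ℝ) ≤ 1) h hp0
    rw [Real.one_rpow] at this
    linarith
  -- tail
  obtain ⟨E, hE⟩ : ∃ E : Finset Γ, ∑' (γ : {γ : Γ // γ ∉ E}), w γ ≤ ε / 4 := by
    have htail := tendsto_tsum_compl_atTop_zero w
    obtain ⟨E, hE⟩ := (htail.eventually_lt_const (by positivity : (0:ℝ) < ε / 4)).exists
    exact ⟨E, hE.le⟩
  refine ⟨Finset.image₂ (· * ·) Ω E, fun x i => softTh c (x.1 i.1), ?_, ?_, ?_⟩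
  · apply continuous_pi
    intro i
    exact (softTh_continuous c).comp ((continuous_apply (i : Γ)).comp continuous_subtype_val)
  · intro x
    set Ω' : Finset Γ := Finset.image₂ (· * ·) Ω E
    set S : Finset Γ := Ω'.filter (fun γ => c < |x.1 γ|) with hS
    have himg : Subtype.val '' {i : ↥Ω' | softTh c (x.1 i.1) ≠ 0} ⊆ ↑S := by
      rintro γ ⟨i, hi, rfl⟩
      simp only [hS, Finset.coe_filter, Set.mem_setOf_eq]
      exact ⟨i.2, softTh_ne_zero hc hi⟩
    have hcard : {i : ↥Ω' | softTh c (x.1 i.1) ≠ 0}.ncard ≤ S.card := by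
      rw [← Set.ncard_image_of_injective _ Subtype.val_injective]
      calc (Subtype.val '' {i : ↥Ω' | softTh c (x.1 i.1) ≠ 0}).ncard
          ≤ (↑S : Set Γ).ncard := Set.ncard_le_ncard himg S.finite_toSet
        _ = S.card := Set.ncard_coe_finset S
    have hcp : 0 < c ^ p := Real.rpow_pos_of_pos hc p
    have hprod : c ^ p * (4 / ε) ^ p = 1 := by
      rw [← Real.mul_rpow hc.le (by positivity)]
      have : c * (4 / ε) = 1 := by
        rw [hc_def]; field_simp
      rw [this, Real.one_rpow]
    have hkey : (S.card : ℝ) < (4 / ε) ^ p := by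
      have hmul : (S.card : ℝ) * c ^ p < 1 := by
        rcases S.eq_empty_or_nonempty with h | h
        · simp [h]
        · have hsum : ∑ γ ∈ S, |x.1 γ| ^ p ≤ 1 := by
            have h1 : ∑ γ ∈ S, ENNReal.ofReal (|x.1 γ| ^ p) ≤ 1 :=
              (ENNReal.sum_le_tsum S).trans x.2
            rw [← ENNReal.ofReal_sum_of_nonneg (fun γ _ => by positivity)] at h1
            exact ENNReal.ofReal_le_one.mp h1
          have heq : (S.card : ℝ) * c ^ p = ∑ _γ ∈ S, c ^ p := by
            rw [Finset.sum_const, nsmul_eq_mul]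
          rw [heq]
          calc ∑ _γ ∈ S, c ^ p < ∑ γ ∈ S, |x.1 γ| ^ p := by
                apply Finset.sum_lt_sum_of_nonempty h
                intro γ hγ
                exact Real.rpow_lt_rpow hc.le ((Finset.mem_filter.mp hγ).2) hp0
            _ ≤ 1 := hsum
      have hq : 0 < (4 / ε) ^ p := Real.rpow_pos_of_pos (by positivity) p
      nlinarith [hmul, hq, hprod]
    have hZ : (S.card : ℤ) < ⌈(4 / ε) ^ p⌉ := Int.lt_ceil.mpr (by exact_mod_cast hkey)
    have : ({i : ↥Ω' | softTh c (x.1 i.1) ≠ 0}.ncard : ℤ) ≤ (S.card : ℤ) := by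
      exact_mod_cast hcard
    linarith
  · intro x y hxy δ hδ
    set f : Γ → ℝ := fun γ => w γ * |x.1 (δ * γ) - y.1 (δ * γ)| with hf_def
    set g : Γ → ℝ := fun γ => 2 * c * w γ + 2 * Set.indicator {a : Γ | a ∉ E} w γ with hg_def
    have hE' : ∀ γ ∈ E, |x.1 (δ * γ) - y.1 (δ * γ)| ≤ 2 * c := by
      intro γ hγ
      have hmem : δ * γ ∈ Finset.image₂ (· * ·) Ω E := Finset.mem_image₂_of_mem hδ hγ
      exact softTh_eq hc (congrFun hxy ⟨δ * γ, hmem⟩)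
    have hfg : ∀ γ, f γ ≤ g γ := by
      intro γ
      by_cases hγ : γ ∈ E
      · have hi : Set.indicator {a : Γ | a ∉ E} w γ = 0 :=
          Set.indicator_of_notMem (by simpa using hγ) w
        simp only [hf_def, hg_def, hi, mul_zero, add_zero]
        calc w γ * |x.1 (δ * γ) - y.1 (δ * γ)| ≤ w γ * (2 * c) :=
              mul_le_mul_of_nonneg_left (hE' γ hγ) (hw_pos γ).le
          _ = 2 * c * w γ := by ring
      · have hi : Set.indicator {a : Γ | a ∉ E} w γ = w γ :=
          Set.indicator_of_mem (by simpa using hγ) w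
        simp only [hf_def, hg_def, hi]
        have hb : |x.1 (δ * γ) - y.1 (δ * γ)| ≤ 2 := by
          have h1 := hx_le_one x (δ * γ)
          have h2 := hx_le_one y (δ * γ)
          calc |x.1 (δ * γ) - y.1 (δ * γ)| ≤ |x.1 (δ * γ)| + |y.1 (δ * γ)| := abs_sub _ _
            _ ≤ 2 := by linarith
        nlinarith [hw_pos γ, abs_nonneg (x.1 (δ * γ) - y.1 (δ * γ))]
    have hf_nonneg : ∀ γ, 0 ≤ f γ := fun γ => mul_nonneg (hw_pos γ).le (abs_nonneg _)
    have hg_summable : Summable g :=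
      (hw_summable.mul_left _).add ((hw_summable.indicator _).mul_left 2)
    have hf_summable : Summable f := Summable.of_nonneg_of_le hf_nonneg hfg hg_summable
    have hind : ∑' γ, Set.indicator {a : Γ | a ∉ E} w γ ≤ ε / 4 := by
      rw [← tsum_subtype]
      exact hE
    calc ∑' γ, f γ ≤ ∑' γ, g γ := Summable.tsum_le_tsum hfg hf_summable hg_summable
      _ = 2 * c * (∑' γ, w γ) + 2 * ∑' γ, Set.indicator {a : Γ | a ∉ E} w γ := by
          rw [Summable.tsum_add (hw_summable.mul_left _) ((hw_summable.indicator _).mul_left 2),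
            tsum_mul_left, tsum_mul_left]
      _ ≤ 2 * c * 1 + 2 * (ε / 4) := by
          gcongr
      _ = ε := by rw [hc_def]; ring
end
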